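/- Let F₂ be the free group of rank 2. An element w of F₂ binds F₂ if and only if w is not a power of a primitive element of F₂, i.e., there do not exist a primitive element p of F₂ and an integer n with w = pⁿ. -/

import Mathlib

open scoped Monoid.Coprod

/-- `G` is the internal free product of its subgroups `G₁` and `G₂` if the natural
homomorphism from the abstract free product `G₁ ∗ G₂` to `G` induced by the inclusion
maps is an isomorphism (equivalently, bijective). -/
def IsInternalFreeProduct {G : Type*} [Group G] (G₁ G₂ : Subgroup G) : Prop :=
  Function.Bijective (Monoid.Coprod.lift G₁.subtype G₂.subtype)

/-- `G₁` is a proper free factor of `G` if there is a nontrivial subgroup `G₂` of `G`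
such that `G` is the internal free product of `G₁` and `G₂`. -/
def IsProperFreeFactor {G : Type*} [Group G] (G₁ : Subgroup G) : Prop :=
  ∃ G₂ : Subgroup G, G₂ ≠ ⊥ ∧ IsInternalFreeProduct G₁ G₂

/-- An element `x` of `G` binds `G` if `x` is not contained in any proper free factor of `G`. -/
def Binds {G : Type*} [Group G] (x : G) : Prop :=
  ∀ G₁ : Subgroup G, IsProperFreeFactor G₁ → x ∉ G₁

/-- A subset `S` of a group `G` is a free basis of `G` if the homomorphism from the
free group on `S` to `G` induced by the inclusion is an isomorphism (equivalently, bijective),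
i.e. `S` freely generates `G`. -/
def IsFreeBasis {G : Type*} [Group G] (S : Set G) : Prop :=
  Function.Bijective (FreeGroup.lift (Subtype.val : S → G))

/-- An element of a free group is primitive if it is a member of some free basis. -/
def IsPrimitive {G : Type*} [Group G] (p : G) : Prop :=
  ∃ S : Set G, IsFreeBasis S ∧ p ∈ S

namespace BindsAux

abbrev F2 := FreeGroup (Fin 2)
abbrev C2 := Multiplicative (ZMod 2)

lemma noncomm : (FreeGroup.of 0 : F2) * FreeGroup.of 1 ≠ FreeGroup.of 1 * FreeGroup.of 0 := by
  intro h
  have h2 := congrArg (FreeGroup.lift ![Equiv.swap 0 1, Equiv.swap (1 : Fin 3) 2]) h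
  simp only [map_mul, FreeGroup.lift_apply_of] at h2
  have h3 : ¬ (Equiv.swap (0 : Fin 3) 1 * Equiv.swap 1 2 = Equiv.swap 1 2 * Equiv.swap 0 1) := by
    decide
  exact h3 (by simpa using h2)

lemma of_ne_one' {α : Type*} (x : α) : FreeGroup.of x ≠ 1 := by
  classical
  intro h
  simpa using congrArg FreeGroup.toWord h

lemma zpowers_ne_top (p : F2) : Subgroup.zpowers p ≠ ⊤ := by
  intro h
  have h0 : FreeGroup.of 0 ∈ Subgroup.zpowers p := h ▸ Subgroup.mem_top _
  have h1 : FreeGroup.of 1 ∈ Subgroup.zpowers p := h ▸ Subgroup.mem_top _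
  obtain ⟨a, ha⟩ := Subgroup.mem_zpowers_iff.mp h0
  obtain ⟨b, hb⟩ := Subgroup.mem_zpowers_iff.mp h1
  exact noncomm (by rw [← ha, ← hb, ← zpow_add, ← zpow_add, add_comm])

lemma isFreeBasis_range_of : IsFreeBasis (Set.range (FreeGroup.of : Fin 2 → F2)) := by
  set e : Fin 2 ≃ Set.range (FreeGroup.of : Fin 2 → F2) :=
    Equiv.ofInjective _ FreeGroup.of_injective with he
  have hfun : (FreeGroup.lift (Subtype.val : Set.range (FreeGroup.of : Fin 2 → F2) → F2))
      = ((FreeGroup.freeGroupCongr e).symm :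
          FreeGroup (Set.range (FreeGroup.of : Fin 2 → F2)) →* F2) := by
    apply FreeGroup.ext_hom
    intro s
    simp only [FreeGroup.lift_apply_of, FreeGroup.freeGroupCongr_symm, FreeGroup.freeGroupCongr,
      MulEquiv.coe_mk, Equiv.coe_fn_mk, FreeGroup.map.of, e]
    exact (Equiv.apply_ofInjective_symm FreeGroup.of_injective s).symm
  rw [IsFreeBasis, hfun]
  exact (FreeGroup.freeGroupCongr e).symm.bijective

lemma isPrimitive_of0 : IsPrimitive (FreeGroup.of 0 : F2) :=
  ⟨_, isFreeBasis_range_of, ⟨0, rfl⟩⟩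

lemma closure_range_isFreeGroup_of (H : Type*) [Group H] [IsFreeGroup H] :
    Subgroup.closure (Set.range (IsFreeGroup.of : IsFreeGroup.Generators H → H)) = ⊤ := by
  have h1 : Set.range (IsFreeGroup.of : IsFreeGroup.Generators H → H)
      = ⇑(IsFreeGroup.mulEquiv H).toMonoidHom '' Set.range (FreeGroup.of) := by
    rw [← Set.range_comp]; rfl
  rw [h1, ← MonoidHom.map_closure, FreeGroup.closure_range_of]
  exact Subgroup.map_top_of_surjective _ (IsFreeGroup.mulEquiv H).surjective

lemma trivial_of_isEmpty_gen {H : Type*} [Group H] [IsFreeGroup H]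
    (h : IsEmpty (IsFreeGroup.Generators H)) (x : H) : x = 1 := by
  have h2 := closure_range_isFreeGroup_of H
  rw [Set.range_eq_empty, Subgroup.closure_empty] at h2
  have hx : x ∈ (⊥ : Subgroup H) := h2 ▸ Subgroup.mem_top x
  simpa using hx

lemma mem_zpowers_of_subsingleton {H : Type*} [Group H] [IsFreeGroup H]
    (hs : Subsingleton (IsFreeGroup.Generators H)) (g₀ : IsFreeGroup.Generators H) (x : H) :
    x ∈ Subgroup.zpowers (IsFreeGroup.of g₀) := by
  have h1 : Subgroup.closure (Set.range (IsFreeGroup.of : _ → H))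
      ≤ Subgroup.zpowers (IsFreeGroup.of g₀) := by
    rw [Subgroup.zpowers_eq_closure]
    apply Subgroup.closure_mono
    rintro _ ⟨a, rfl⟩
    simp [Subsingleton.elim a g₀]
  exact h1 (by rw [closure_range_isFreeGroup_of]; trivial)

lemma card_C2 : Nat.card C2 = 2 := by
  rw [Nat.card_congr (Multiplicative.toAdd (α := ZMod 2))]
  exact Nat.card_zmod 2

lemma subsingleton_of_card_le (α : Type*) [Finite (α → C2)]
    (h : Nat.card (α → C2) ≤ 2) : Subsingleton α := by
  by_contra hns
  rw [not_subsingleton_iff_nontrivial] at hns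
  obtain ⟨x, y, hxy⟩ := hns
  classical
  have hinj : Function.Injective
      (fun (c : C2 × C2) (t : α) => if t = x then c.1 else if t = y then c.2 else 1) := by
    intro a b hab
    have h1 := congrFun hab x
    have h2 := congrFun hab y
    simp only [if_pos rfl] at h1
    simp only [if_neg (Ne.symm hxy), if_pos rfl] at h2
    exact Prod.ext h1 h2
  have hle := Nat.card_le_card_of_injective _ hinj
  have hc : Nat.card (C2 × C2) = 4 := by rw [Nat.card_prod, card_C2]
  omega

lemma two_le_card (α : Type*) [Nonempty α] [Finite (α → C2)] : 2 ≤ Nat.card (α → C2) := by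
  have hnt : Nontrivial (α → C2) := by
    obtain ⟨a⟩ := ‹Nonempty α›
    refine ⟨fun _ => 1, fun _ => Multiplicative.ofAdd 1, fun h => ?_⟩
    have := congrFun h a
    exact absurd this (by decide)
  exact Finite.one_lt_card

lemma isPrimitive_of_generators {G₁ G₂ : Subgroup F2}
    (hbij : Function.Bijective (Monoid.Coprod.lift G₁.subtype G₂.subtype))
    (h : G₁) (k : G₂)
    (hh : ∀ x : G₁, x ∈ Subgroup.zpowers h)
    (hk : ∀ x : G₂, x ∈ Subgroup.zpowers k)
    (fh : ∀ (K : Type) [Group K] (c : K), ∃ f : G₁ →* K, f h = c)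
    (fk : ∀ (K : Type) [Group K] (c : K), ∃ f : G₂ →* K, f k = c) :
    IsPrimitive ((h : F2)) := by
  classical
  set p : F2 := (h : F2) with hp
  set q : F2 := (k : F2) with hq
  have hG₁ : G₁ ≤ Subgroup.zpowers p := by
    intro x hx
    obtain ⟨n, hn⟩ := Subgroup.mem_zpowers_iff.mp (hh ⟨x, hx⟩)
    exact Subgroup.mem_zpowers_iff.mpr ⟨n, by simpa using congrArg (fun y : ↥G₁ => (y : F2)) hn⟩
  have hG₂ : G₂ ≤ Subgroup.zpowers q := by
    intro x hx
    obtain ⟨n, hn⟩ := Subgroup.mem_zpowers_iff.mp (hk ⟨x, hx⟩)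
    exact Subgroup.mem_zpowers_iff.mpr ⟨n, by simpa using congrArg (fun y : ↥G₂ => (y : F2)) hn⟩
  have hrange : G₁ ⊔ G₂ = ⊤ := by
    have hr : (Monoid.Coprod.lift G₁.subtype G₂.subtype).range = ⊤ :=
      MonoidHom.range_eq_top.mpr hbij.2
    rwa [Monoid.Coprod.range_lift, Subgroup.range_subtype, Subgroup.range_subtype] at hr
  have hpq : p ≠ q := by
    intro hpq
    apply zpowers_ne_top p
    rw [eq_top_iff, ← hrange]
    exact sup_le hG₁ (hpq ▸ hG₂)
  set S : Set F2 := {p, q} with hS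
  have hpS : p ∈ S := Set.mem_insert _ _
  have hqS : q ∈ S := Set.mem_insert_iff.mpr (Or.inr rfl)
  let φ : FreeGroup S →* ↥G₁ ∗ ↥G₂ := FreeGroup.lift
    (fun s => if (s : F2) = p then Monoid.Coprod.inl h else Monoid.Coprod.inr k)
  have hφp : φ (FreeGroup.of ⟨p, hpS⟩) = Monoid.Coprod.inl h := by
    simp [φ]
  have hφq : φ (FreeGroup.of ⟨q, hqS⟩) = Monoid.Coprod.inr k := by
    simp [φ, Ne.symm hpq]
  have hcomp : (Monoid.Coprod.lift G₁.subtype G₂.subtype).comp φ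
      = FreeGroup.lift (Subtype.val : S → F2) := by
    apply FreeGroup.ext_hom
    intro s
    by_cases hs : (s : F2) = p
    · simp [φ, hs, Monoid.Coprod.lift_apply_inl]; exact hp.symm
    · have hs' : (s : F2) = q := s.2.resolve_left hs
      simp [φ, hs, hs', Ne.symm hpq, Monoid.Coprod.lift_apply_inr]; exact hq.symm
  obtain ⟨f₁, hf₁⟩ := fh (FreeGroup S) (FreeGroup.of ⟨p, hpS⟩)
  obtain ⟨f₂, hf₂⟩ := fk (FreeGroup S) (FreeGroup.of ⟨q, hqS⟩)
  have hψφ : (Monoid.Coprod.lift f₁ f₂).comp φ = MonoidHom.id _ := by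
    apply FreeGroup.ext_hom
    intro s
    by_cases hs : (s : F2) = p
    · rw [MonoidHom.comp_apply, MonoidHom.id_apply]
      have hsp : φ (FreeGroup.of s) = Monoid.Coprod.inl h := by simp [φ, hs]
      rw [hsp, Monoid.Coprod.lift_apply_inl, hf₁]
      exact congrArg _ (Subtype.ext hs.symm)
    · have hs' : (s : F2) = q := s.2.resolve_left hs
      rw [MonoidHom.comp_apply, MonoidHom.id_apply]
      have hsq : φ (FreeGroup.of s) = Monoid.Coprod.inr k := by simp [φ, hs]
      rw [hsq, Monoid.Coprod.lift_apply_inr, hf₂]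
      exact congrArg _ (Subtype.ext hs'.symm)
  have hφsurj : Function.Surjective φ := by
    intro z
    suffices hz : z ∈ MonoidHom.range φ by exact hz
    induction z using Monoid.Coprod.induction_on with
    | inl x =>
      obtain ⟨n, hn⟩ := Subgroup.mem_zpowers_iff.mp (hh x)
      refine ⟨(FreeGroup.of (⟨p, hpS⟩ : S)) ^ n, ?_⟩
      rw [map_zpow, hφp, ← map_zpow, hn]
    | inr x =>
      obtain ⟨n, hn⟩ := Subgroup.mem_zpowers_iff.mp (hk x)
      refine ⟨(FreeGroup.of (⟨q, hqS⟩ : S)) ^ n, ?_⟩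
      rw [map_zpow, hφq, ← map_zpow, hn]
    | mul a b ha hb => exact mul_mem ha hb
  have hφinj : Function.Injective φ := by
    intro a b hab
    have h2 := congrArg (Monoid.Coprod.lift f₁ f₂) hab
    calc a = (Monoid.Coprod.lift f₁ f₂).comp φ a := by rw [hψφ]; rfl
    _ = (Monoid.Coprod.lift f₁ f₂).comp φ b := h2
    _ = b := by rw [hψφ]; rfl
  refine ⟨S, ?_, hpS⟩
  rw [IsFreeBasis, ← hcomp, MonoidHom.coe_comp]
  exact hbij.comp ⟨hφinj, hφsurj⟩

lemma not_binds_of_primitive_pow {p : F2} (hp : IsPrimitive p) (n : ℤ) : ¬ Binds (p ^ n) := by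
  classical
  obtain ⟨S, hS, hpS⟩ := hp
  intro hB
  have hq : ∃ q ∈ S, q ≠ p := by
    by_contra hcon
    push_neg at hcon
    apply zpowers_ne_top p
    have hr : (FreeGroup.lift (Subtype.val : S → F2)).range = ⊤ :=
      MonoidHom.range_eq_top.mpr hS.2
    rw [FreeGroup.range_lift_eq_closure, Subtype.range_val] at hr
    rw [eq_top_iff, ← hr, Subgroup.zpowers_eq_closure]
    exact Subgroup.closure_mono (fun x hx => hcon x hx)
  obtain ⟨q, hqS, hqp⟩ := hq
  set G₁ := Subgroup.zpowers p with hG₁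
  set G₂ := Subgroup.closure (S \ {p}) with hG₂
  have hqG₂ : q ∈ G₂ := Subgroup.subset_closure ⟨hqS, hqp⟩
  have hq1 : q ≠ 1 := by
    intro hq1
    have h2 : FreeGroup.lift (Subtype.val : S → F2) (FreeGroup.of (⟨q, hqS⟩ : S))
        = FreeGroup.lift (Subtype.val : S → F2) 1 := by
      rw [FreeGroup.lift_apply_of, map_one]; exact hq1
    exact of_ne_one' _ (hS.1 h2)
  let χ : FreeGroup S →* ↥G₁ ∗ ↥G₂ := FreeGroup.lift (fun s =>
    if hs : (s : F2) = p then Monoid.Coprod.inl ⟨p, Subgroup.mem_zpowers p⟩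
    else Monoid.Coprod.inr ⟨s, Subgroup.subset_closure ⟨s.2, hs⟩⟩)
  have hcomp : (Monoid.Coprod.lift G₁.subtype G₂.subtype).comp χ
      = FreeGroup.lift (Subtype.val : S → F2) := by
    apply FreeGroup.ext_hom
    intro s
    by_cases hs : (s : F2) = p
    · simp [χ, hs, Monoid.Coprod.lift_apply_inl]
    · simp [χ, hs, Monoid.Coprod.lift_apply_inr]
  have hχp : χ (FreeGroup.of ⟨p, hpS⟩) = Monoid.Coprod.inl ⟨p, Subgroup.mem_zpowers p⟩ := by
    simp [χ]
  have hχsurj : Function.Surjective χ := by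
    intro z
    suffices hz : z ∈ MonoidHom.range χ by exact hz
    induction z using Monoid.Coprod.induction_on with
    | inl x =>
      obtain ⟨m, hm⟩ := Subgroup.mem_zpowers_iff.mp x.2
      have hx : x = (⟨p, Subgroup.mem_zpowers p⟩ : ↥G₁) ^ m := by
        apply Subtype.ext
        rw [← hm]
        simp
      refine ⟨(FreeGroup.of (⟨p, hpS⟩ : S)) ^ m, ?_⟩
      rw [map_zpow, hχp, ← map_zpow, ← hx]
    | inr x =>
      have key : ∀ (y : F2) (hy : y ∈ G₂),
          Monoid.Coprod.inr (⟨y, hy⟩ : ↥G₂) ∈ MonoidHom.range χ := by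
        intro y hy
        rw [hG₂] at hy
        induction hy using Subgroup.closure_induction with
        | mem z hz =>
          have hzp : z ≠ p := hz.2
          refine ⟨FreeGroup.of ⟨z, hz.1⟩, ?_⟩
          simp [χ, hzp]
        | one =>
          refine ⟨1, ?_⟩
          rw [map_one]
          have h2 : (⟨(1 : F2), Subgroup.one_mem _⟩ : ↥G₂) = 1 := rfl
          rw [h2, map_one]
        | mul a b ha hb iha ihb =>
          have h2 : (⟨a * b, Subgroup.mul_mem _ ha hb⟩ : ↥G₂)
              = (⟨a, ha⟩ : ↥G₂) * ⟨b, hb⟩ := rfl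
          rw [h2, map_mul]
          exact mul_mem (iha ha) (ihb hb)
        | inv a ha iha =>
          have h2 : (⟨a⁻¹, Subgroup.inv_mem _ ha⟩ : ↥G₂) = (⟨a, ha⟩ : ↥G₂)⁻¹ := rfl
          rw [h2, map_inv]
          exact inv_mem (iha ha)
      have h3 := key x x.2
      simpa using h3
    | mul a b ha hb => exact mul_mem ha hb
  have hLsurj : Function.Surjective (Monoid.Coprod.lift G₁.subtype G₂.subtype) := by
    intro y
    obtain ⟨a, ha⟩ := hS.2 y
    exact ⟨χ a, by rw [← ha, ← hcomp]; rfl⟩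
  have hLinj : Function.Injective (Monoid.Coprod.lift G₁.subtype G₂.subtype) := by
    intro z z' hzz
    obtain ⟨a, rfl⟩ := hχsurj z
    obtain ⟨b, rfl⟩ := hχsurj z'
    have h2 : FreeGroup.lift (Subtype.val : S → F2) a
        = FreeGroup.lift (Subtype.val : S → F2) b := by
      rw [← hcomp]; exact hzz
    rw [hS.1 h2]
  refine hB G₁ ⟨G₂, ?_, hLinj, hLsurj⟩ (Subgroup.mem_zpowers_iff.mpr ⟨n, rfl⟩)
  intro hbot
  rw [hbot] at hqG₂
  exact hq1 (Subgroup.mem_bot.mp hqG₂)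

end BindsAux

open BindsAux in
theorem binds_freeGroup_two_iff (w : FreeGroup (Fin 2)) :
    Binds w ↔ ¬ ∃ (p : FreeGroup (Fin 2)) (n : ℤ), IsPrimitive p ∧ w = p ^ n := by
  constructor
  · rintro hB ⟨p, n, hp, rfl⟩
    exact not_binds_of_primitive_pow hp n hB
  · intro H G₁ hfac hw
    obtain ⟨G₂, hG₂, hbij⟩ := hfac
    -- hom counting
    let E : (↥G₁ ∗ ↥G₂) ≃* F2 := MulEquiv.ofBijective _ hbij
    let T : ((↥G₁ →* C2) × (↥G₂ →* C2)) ≃ (Fin 2 → C2) :=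
      (Monoid.Coprod.liftEquiv).trans
        ((MulEquiv.monoidHomCongrLeftEquiv E).trans FreeGroup.lift.symm)
    haveI : Finite ((↥G₁ →* C2) × (↥G₂ →* C2)) := Finite.of_equiv _ T.symm
    haveI hfin1 : Finite (↥G₁ →* C2) := Finite.prod_left (↥G₂ →* C2)
    haveI hfin2 : Finite (↥G₂ →* C2) := Finite.prod_right (↥G₁ →* C2)
    haveI : Finite (IsFreeGroup.Generators ↥G₁ → C2) :=
      Finite.of_equiv _ (IsFreeGroup.lift (G := ↥G₁) (H := C2)).symm
    haveI : Finite (IsFreeGroup.Generators ↥G₂ → C2) :=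
      Finite.of_equiv _ (IsFreeGroup.lift (G := ↥G₂) (H := C2)).symm
    have hcard1 : Nat.card (↥G₁ →* C2) = Nat.card (IsFreeGroup.Generators ↥G₁ → C2) :=
      Nat.card_congr (IsFreeGroup.lift (G := ↥G₁) (H := C2)).symm
    have hcard2 : Nat.card (↥G₂ →* C2) = Nat.card (IsFreeGroup.Generators ↥G₂ → C2) :=
      Nat.card_congr (IsFreeGroup.lift (G := ↥G₂) (H := C2)).symm
    have hc4 : Nat.card (↥G₁ →* C2) * Nat.card (↥G₂ →* C2) = 4 := by
      rw [← Nat.card_prod, Nat.card_congr T]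
      rw [Nat.card_eq_fintype_card]
      decide
    have hne₂ : Nonempty (IsFreeGroup.Generators ↥G₂) := by
      by_contra hcon
      rw [not_nonempty_iff] at hcon
      apply hG₂
      rw [Subgroup.eq_bot_iff_forall]
      intro x hx
      have h2 := trivial_of_isEmpty_gen hcon (⟨x, hx⟩ : ↥G₂)
      exact congrArg Subtype.val h2
    have hb2 : 2 ≤ Nat.card (↥G₂ →* C2) := by
      rw [hcard2]; exact two_le_card _
    have ha2 : Nat.card (↥G₁ →* C2) ≤ 2 := by
      by_contra hcon
      push_neg at hcon
      have := Nat.mul_le_mul hcon hb2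
      omega
    have hs1 : Subsingleton (IsFreeGroup.Generators ↥G₁) :=
      subsingleton_of_card_le _ (by rw [← hcard1]; exact ha2)
    rcases isEmpty_or_nonempty (IsFreeGroup.Generators ↥G₁) with hemp | hne1
    · -- G₁ trivial, so w = 1
      have hw1 : w = 1 := congrArg Subtype.val (trivial_of_isEmpty_gen hemp (⟨w, hw⟩ : ↥G₁))
      exact H ⟨FreeGroup.of 0, 0, isPrimitive_of0, by rw [hw1, zpow_zero]⟩
    · obtain ⟨g₁⟩ := hne1
      haveI : Nonempty (IsFreeGroup.Generators ↥G₁) := ⟨g₁⟩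
      have ha2' : 2 ≤ Nat.card (↥G₁ →* C2) := by
        rw [hcard1]; exact two_le_card _
      have hb2' : Nat.card (↥G₂ →* C2) ≤ 2 := by
        by_contra hcon
        push_neg at hcon
        have := Nat.mul_le_mul ha2' hcon
        omega
      have hs2 : Subsingleton (IsFreeGroup.Generators ↥G₂) :=
        subsingleton_of_card_le _ (by rw [← hcard2]; exact hb2')
      obtain ⟨g₂⟩ := hne₂
      have hprim : IsPrimitive ((IsFreeGroup.of g₁ : ↥G₁) : F2) := by
        refine isPrimitive_of_generators hbij (IsFreeGroup.of g₁) (IsFreeGroup.of g₂)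
          (mem_zpowers_of_subsingleton hs1 g₁) (mem_zpowers_of_subsingleton hs2 g₂)
          (fun K _ c => ⟨IsFreeGroup.lift (fun _ => c), IsFreeGroup.lift_of _ g₁⟩)
          (fun K _ c => ⟨IsFreeGroup.lift (fun _ => c), IsFreeGroup.lift_of _ g₂⟩)
      obtain ⟨n, hn⟩ := Subgroup.mem_zpowers_iff.mp
        (mem_zpowers_of_subsingleton hs1 g₁ (⟨w, hw⟩ : ↥G₁))
      refine H ⟨((IsFreeGroup.of g₁ : ↥G₁) : F2), n, hprim, ?_⟩
      have h2 := congrArg (fun y : ↥G₁ => (y : F2)) hn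
      simpa using h2.symm
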